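/- Let X be a zero-dimensional compact Hausdorff space. Then the family of all sets of the form ⋂_{i<n} ⟨A_i,B_i⟩, where {A_i : i < n} is a partition of X into clopen sets and each B_i ⊆ X is clopen, is a basis for the compact-open topology on H(X). -/

import Mathlib

open Set TopologicalSpace

noncomputable section

/-- The compact-open topology on the group `H(X)` of self-homeomorphisms of `X`,
generated by the sets `V(K,U) = {h : h[K] ⊆ U}` for `K` compact and `U` open. -/
instance homeoCO {X : Type*} [TopologicalSpace X] : TopologicalSpace (X ≃ₜ X) :=
  TopologicalSpace.generateFrom
    {S : Set (X ≃ₜ X) | ∃ K U : Set X, IsCompact K ∧ IsOpen U ∧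
      S = {h : X ≃ₜ X | ∀ x ∈ K, h x ∈ U}}

theorem exists_clopen_between {X : Type*} [TopologicalSpace X] [CompactSpace X] [T2Space X]
    [TotallyDisconnectedSpace X] {K U : Set X} (hK : IsCompact K) (hU : IsOpen U)
    (hKU : K ⊆ U) : ∃ C, IsClopen C ∧ K ⊆ C ∧ C ⊆ U := by
  choose V hV hxV hVU using fun x : K => compact_exists_isClopen_in_isOpen hU (hKU x.2)
  obtain ⟨t, ht⟩ := hK.elim_nhds_subcover' (fun x hx => V ⟨x, hx⟩)
    (fun x hx => ((hV ⟨x, hx⟩).2).mem_nhds (hxV ⟨x, hx⟩))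
  refine ⟨⋃ x ∈ t, V x, (t.finite_toSet.isClopen_biUnion fun x _ => hV x), ht, ?_⟩
  exact iUnion₂_subset fun x _ => hVU x

theorem pair_eq {X : Type*} [TopologicalSpace X] (A B : Set X) :
    {h : X ≃ₜ X | ⇑h '' A = B} =
      {h : X ≃ₜ X | ∀ x ∈ A, h x ∈ B} ∩ {h : X ≃ₜ X | ∀ x ∈ Aᶜ, h x ∈ Bᶜ} := by
  ext g
  constructor
  · rintro (rfl : ⇑g '' A = B)
    refine ⟨fun x hx => mem_image_of_mem g hx, fun x hx hxB => ?_⟩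
    obtain ⟨y, hy, hyx⟩ := hxB
    exact hx (g.injective hyx ▸ hy)
  · rintro ⟨h1, h2⟩
    apply Subset.antisymm (image_subset_iff.2 h1)
    intro b hb
    by_cases hy : g.symm b ∈ A
    · exact ⟨g.symm b, hy, g.apply_symm_apply b⟩
    · exact absurd (g.apply_symm_apply b ▸ h2 _ hy) (by simpa using hb)

/-- For a zero-dimensional compact Hausdorff space `X`, the family of sets of the
form `⋂_{i<n} ⟨A_i,B_i⟩`, where `{A_i : i < n}` is a partition of `X` into clopen
sets and each `B_i` is clopen (and `⟨A,B⟩ = {h : h[A] = B}`), is a basis for the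
compact-open topology on `H(X)`. -/
theorem stmt_1 (X : Type*) [TopologicalSpace X] [CompactSpace X] [T2Space X]
    [TotallyDisconnectedSpace X] :
    TopologicalSpace.IsTopologicalBasis
      {S : Set (X ≃ₜ X) | ∃ (n : ℕ) (A B : Fin n → Set X),
        (∀ i, IsClopen (A i) ∧ (A i).Nonempty) ∧
        (∀ i j, i ≠ j → Disjoint (A i) (A j)) ∧
        (⋃ i, A i) = univ ∧
        (∀ i, IsClopen (B i)) ∧
        S = ⋂ i, {h : X ≃ₜ X | ⇑h '' A i = B i}} := by
  classical
  have hopenV : ∀ {K U : Set X}, IsCompact K → IsOpen U →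
      IsOpen {h : X ≃ₜ X | ∀ x ∈ K, h x ∈ U} :=
    fun hK hU => TopologicalSpace.GenerateOpen.basic _ ⟨_, _, hK, hU, rfl⟩
  have hopenAB : ∀ {A B : Set X}, IsClopen A → IsClopen B →
      IsOpen {h : X ≃ₜ X | ⇑h '' A = B} := by
    intro A B hA hB
    rw [pair_eq]
    exact (hopenV hA.1.isCompact hB.2).inter
      (hopenV hA.compl.1.isCompact hB.compl.2)
  apply isTopologicalBasis_of_isOpen_of_nhds
  · rintro S ⟨n, A, B, hA, -, -, hB, rfl⟩
    exact isOpen_iInter_of_finite fun i => hopenAB (hA i).1 (hB i)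
  · intro g u hgu hu
    have basis := isTopologicalBasis_of_subbasis
      (s := {S : Set (X ≃ₜ X) | ∃ K U : Set X, IsCompact K ∧ IsOpen U ∧
        S = {h : X ≃ₜ X | ∀ x ∈ K, h x ∈ U}}) rfl
    obtain ⟨v, ⟨F, ⟨hFfin, hFsub⟩, rfl⟩, hgv, hvu⟩ := basis.exists_subset_of_mem_open hgu hu
    haveI : Finite F := hFfin.to_subtype
    choose K U hK hU ht using fun t : F => hFsub t.2
    -- g maps K t into U t
    have hgK : ∀ t : F, K t ⊆ ⇑g ⁻¹' U t := by
      intro t x hx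
      have : g ∈ (t : Set (X ≃ₜ X)) := hgv t t.2
      rw [ht t] at this
      exact this x hx
    choose C hC hKC hCU using fun t : F =>
      exists_clopen_between (hK t) ((hU t).preimage g.continuous) (hgK t)
    -- atoms
    set D : (F → Bool) → Set X := fun σ => ⋂ t, (if σ t then C t else (C t)ᶜ) with hD
    have mem_D : ∀ (σ : F → Bool) (x : X), x ∈ D σ ↔ ∀ t, (x ∈ C t ↔ σ t = true) := by
      intro σ x
      simp only [hD, mem_iInter]
      refine forall_congr' fun t => ?_
      cases h : σ t <;> simp [h]
    have hDclopen : ∀ σ, IsClopen (D σ) := by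
      intro σ
      refine ⟨isClosed_iInter fun t => ?_, isOpen_iInter_of_finite fun t => ?_⟩
      · cases σ t <;> simp [(hC t).1, (hC t).compl.1]
      · cases σ t <;> simp [(hC t).2, (hC t).compl.2]
    set σx : X → F → Bool := fun x t => decide (x ∈ C t) with hσx
    have hxD : ∀ x : X, x ∈ D (σx x) := fun x => (mem_D _ x).2 fun t => by simp [hσx]
    set T := {σ : F → Bool // (D σ).Nonempty} with hT
    haveI : Fintype T := Fintype.ofFinite T
    set n := Fintype.card T with hn
    set e : Fin n ≃ T := (Fintype.equivFin T).symm with he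
    refine ⟨⋂ i, {h : X ≃ₜ X | ⇑h '' D (e i).1 = ⇑g '' D (e i).1},
      ⟨n, fun i => D (e i).1, fun i => ⇑g '' D (e i).1,
        fun i => ⟨hDclopen _, (e i).2⟩, ?_, ?_, ?_, rfl⟩,
      mem_iInter.2 fun i => rfl, ?_⟩
    · -- pairwise disjoint
      intro i j hij
      rw [Set.disjoint_left]
      intro x hxi hxj
      apply hij
      apply e.injective
      apply Subtype.ext
      funext t
      rw [Bool.eq_iff_iff, ← (mem_D _ x).1 hxi t, ← (mem_D _ x).1 hxj t]
    · -- union = univ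
      apply eq_univ_of_forall
      intro x
      refine mem_iUnion.2 ⟨e.symm ⟨σx x, ⟨x, hxD x⟩⟩, ?_⟩
      simpa [e.apply_symm_apply] using hxD x
    · -- B clopen
      intro i
      show IsClopen (⇑g '' D (e i).1)
      rw [show ⇑g '' D (e i).1 = ⇑g.symm ⁻¹' D (e i).1 from g.toEquiv.image_eq_preimage_symm _]
      exact (hDclopen _).preimage g.symm.continuous
    · -- subset
      intro f hf
      apply hvu
      rw [mem_sInter]
      intro t htF
      have hte : t = {h : X ≃ₜ X | ∀ x ∈ K ⟨t, htF⟩, h x ∈ U ⟨t, htF⟩} := ht ⟨t, htF⟩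
      rw [hte]
      intro x hxK
      have hxC : x ∈ C ⟨t, htF⟩ := hKC ⟨t, htF⟩ hxK
      have hi : ⇑f '' D (σx x) = ⇑g '' D (σx x) := by
        have := mem_iInter.1 hf (e.symm ⟨σx x, ⟨x, hxD x⟩⟩)
        simpa [e.apply_symm_apply] using this
      have h1 : f x ∈ ⇑f '' D (σx x) := mem_image_of_mem f (hxD x)
      rw [hi] at h1
      have hsub : D (σx x) ⊆ C ⟨t, htF⟩ := by
        intro y hy
        exact ((mem_D _ y).1 hy ⟨t, htF⟩).2 (by simp [hσx, hxC])
      obtain ⟨y, hy, hyx⟩ := h1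
      rw [← hyx]
      exact hCU ⟨t, htF⟩ (hsub hy)
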